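/- Let $n \geq 1$, let $I \in \mathbb{R}$ with $-1 < I < 1$, and set $a_0 = \sqrt{(1+I)/(1-I)}$. Let $V$ be a $2n$-dimensional real vector space with basis $f_1, \dots, f_{2n}$, and let $\omega$ be the alternating bilinear form on $V$ determined by $\omega(f_i, f_j) = 0 = \omega(f_{n+i}, f_{n+j})$ and $\omega(f_i, f_{n+j}) = -\delta_{ij}$ for $1 \leq i, j \leq n$. For a subset $S \subseteq \{1, \dots, n\}$ define the linear map $F_S : V \to V$ by $F_S f_i = a_0 f_{n+i}$ if $i \in S$, $F_S f_i = -a_0 f_{n+i}$ if $i \notin S$, $F_S f_{n+i} = (1/a_0) f_i$ if $i \in S$, $F_S f_{n+i} = -(1/a_0) f_i$ if $i \notin S$, and define the symmetric bilinear form $g_S$ on $V$ by $g_S(f_i, f_i) = -a_0$ if $i \in S$, $g_S(f_i, f_i) = a_0$ if $i \notin S$, $g_S(f_{n+i}, f_{n+i}) = 1/a_0$ if $i \in S$, $g_S(f_{n+i}, f_{n+i}) = -1/a_0$ if $i \notin S$, and $g_S(f_k, f_l) = 0$ whenever $k \neq l$. Then $F_S \circ F_S = \mathrm{id}_V$, $g_S$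 is nondegenerate, and $\omega(x, y) = g_S(x, F_S y)$ for all $x, y \in V$. -/

import Mathlib

/-- Verification of the almost para-Kähler structures `(g_S, F_S)` on the base:
with the basis `f₁,…,f₂ₙ` indexed by `Fin n ⊕ Fin n` (`Sum.inl i ↔ fᵢ`,
`Sum.inr i ↔ f_{n+i}`), the tensors `F_S` and `g_S` satisfy `F_S² = id`,
`g_S` is nondegenerate, and `ω(x,y) = g_S(x, F_S y)`. -/
theorem stmt_12 (n : ℕ) (hn : 1 ≤ n) (I : ℝ) (hI₁ : -1 < I) (hI₂ : I < 1)
    (a₀ : ℝ) (ha₀ : a₀ = Real.sqrt ((1 + I) / (1 - I)))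
    {V : Type*} [AddCommGroup V] [Module ℝ V]
    (b : Module.Basis (Fin n ⊕ Fin n) ℝ V)
    (ω : V →ₗ[ℝ] V →ₗ[ℝ] ℝ)
    (hω_alt : ∀ x : V, ω x x = 0)
    (hω₁ : ∀ i j : Fin n, ω (b (Sum.inl i)) (b (Sum.inl j)) = 0)
    (hω₂ : ∀ i j : Fin n, ω (b (Sum.inr i)) (b (Sum.inr j)) = 0)
    (hω₃ : ∀ i j : Fin n, ω (b (Sum.inl i)) (b (Sum.inr j)) = -(if i = j then 1 else 0))
    (S : Finset (Fin n))
    (F : V →ₗ[ℝ] V)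
    (hF₁ : ∀ i ∈ S, F (b (Sum.inl i)) = a₀ • b (Sum.inr i))
    (hF₂ : ∀ i ∉ S, F (b (Sum.inl i)) = -(a₀ • b (Sum.inr i)))
    (hF₃ : ∀ i ∈ S, F (b (Sum.inr i)) = (1 / a₀) • b (Sum.inl i))
    (hF₄ : ∀ i ∉ S, F (b (Sum.inr i)) = -((1 / a₀) • b (Sum.inl i)))
    (g : V →ₗ[ℝ] V →ₗ[ℝ] ℝ)
    (hg_symm : ∀ x y : V, g x y = g y x)
    (hg₁ : ∀ i ∈ S, g (b (Sum.inl i)) (b (Sum.inl i)) = -a₀)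
    (hg₂ : ∀ i ∉ S, g (b (Sum.inl i)) (b (Sum.inl i)) = a₀)
    (hg₃ : ∀ i ∈ S, g (b (Sum.inr i)) (b (Sum.inr i)) = 1 / a₀)
    (hg₄ : ∀ i ∉ S, g (b (Sum.inr i)) (b (Sum.inr i)) = -(1 / a₀))
    (hg₅ : ∀ k l : Fin n ⊕ Fin n, k ≠ l → g (b k) (b l) = 0) :
    F ∘ₗ F = LinearMap.id ∧
    (∀ x : V, (∀ y : V, g x y = 0) → x = 0) ∧
    (∀ x y : V, ω x y = g x (F y)) := by
  have hpos : 0 < a₀ := ha₀ ▸ Real.sqrt_pos.mpr (div_pos (by linarith) (by linarith))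
  have ha : a₀ ≠ 0 := ne_of_gt hpos
  refine ⟨?_, ?_, ?_⟩
  · -- F ∘ F = id
    apply b.ext
    rintro (i | i) <;> by_cases hi : i ∈ S <;>
      simp [LinearMap.comp_apply, hF₁ i, hF₂ i, hF₃ i, hF₄ i, hi, smul_smul,
        one_div, inv_mul_cancel₀ ha, mul_inv_cancel₀ ha]
  · -- nondegeneracy
    intro x hx
    have hdiag : ∀ l : Fin n ⊕ Fin n, g (b l) (b l) ≠ 0 := by
      rintro (i | i) <;> by_cases hi : i ∈ S <;>
        simp [hg₁ i, hg₂ i, hg₃ i, hg₄ i, hi, ha]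
    have hcoord : ∀ l, b.repr x l = 0 := by
      intro l
      have h0 : g x (b l) = 0 := hx (b l)
      have hexp : g x (b l) = b.repr x l * g (b l) (b l) := by
        conv_lhs => rw [← b.sum_repr x]
        rw [map_sum, LinearMap.sum_apply]
        rw [Finset.sum_eq_single l]
        · simp
        · intro k _ hk
          simp [hg₅ k l hk]
        · intro h
          exact absurd (Finset.mem_univ l) h
      have := hexp ▸ h0
      exact (mul_eq_zero.mp this).resolve_right (hdiag l)
    have : b.repr x = 0 := Finsupp.ext hcoord
    simpa using congrArg b.repr.symm this
  · -- ω = g ∘ F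
    have hanti : ∀ x y : V, ω y x = -ω x y := by
      intro x y
      have h := hω_alt (x + y)
      have hx := hω_alt x
      have hy := hω_alt y
      simp only [map_add, LinearMap.add_apply] at h
      linarith
    suffices h : ω = g.compl₂ F by
      intro x y
      simpa [LinearMap.compl₂_apply] using congrArg (fun f : V →ₗ[ℝ] V →ₗ[ℝ] ℝ => f x y) h
    apply b.ext
    intro k
    apply b.ext
    intro l
    simp only [LinearMap.compl₂_apply]
    rcases k with i | i <;> rcases l with j | j
    · -- inl inl
      by_cases hj : j ∈ S
      · rw [hω₁ i j, hF₁ j hj, map_smul]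
        simp [hg₅ _ _ (by simp : (Sum.inl i : Fin n ⊕ Fin n) ≠ Sum.inr j)]
      · rw [hω₁ i j, hF₂ j hj]
        simp [hg₅ _ _ (by simp : (Sum.inl i : Fin n ⊕ Fin n) ≠ Sum.inr j)]
    · -- inl inr
      by_cases hj : j ∈ S
      · rw [hω₃ i j, hF₃ j hj, map_smul]
        by_cases hij : i = j
        · subst hij
          rw [hg₁ i hj]
          simp; field_simp
        · rw [hg₅ _ _ (by simp [hij] : (Sum.inl i : Fin n ⊕ Fin n) ≠ Sum.inl j)]
          simp [hij]
      · rw [hω₃ i j, hF₄ j hj]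
        by_cases hij : i = j
        · subst hij
          rw [map_neg, map_smul, hg₂ i hj]
          simp; field_simp
        · rw [map_neg, map_smul, hg₅ _ _ (by simp [hij] : (Sum.inl i : Fin n ⊕ Fin n) ≠ Sum.inl j)]
          simp [hij]
    · -- inr inl
      rw [hanti, hω₃ j i]
      by_cases hj : j ∈ S
      · rw [hF₁ j hj, map_smul]
        by_cases hij : i = j
        · subst hij
          rw [hg₃ i hj]
          simp; field_simp
        · rw [hg₅ _ _ (by simp [hij] : (Sum.inr i : Fin n ⊕ Fin n) ≠ Sum.inr j)]
          simp [hij, eq_comm]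
      · rw [hF₂ j hj, map_neg, map_smul]
        by_cases hij : i = j
        · subst hij
          rw [hg₄ i hj]
          simp; field_simp
        · rw [hg₅ _ _ (by simp [hij] : (Sum.inr i : Fin n ⊕ Fin n) ≠ Sum.inr j)]
          simp [hij, eq_comm]
    · -- inr inr
      by_cases hj : j ∈ S
      · rw [hω₂ i j, hF₃ j hj, map_smul]
        simp [hg₅ _ _ (by simp : (Sum.inr i : Fin n ⊕ Fin n) ≠ Sum.inl j)]
      · rw [hω₂ i j, hF₄ j hj, map_neg, map_smul]
        simp [hg₅ _ _ (by simp : (Sum.inr i : Fin n ⊕ Fin n) ≠ Sum.inl j)]
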